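/- arXiv:1812.09663 — 2 statements merged into one kernel-verified Lean document; each statement's English description precedes it below -/
import Mathlib

section
/- Let F ⊆ G be a field extension with G ≠ F, let α ∈ G \ F with minimal polynomial p over F, and let L = F((t)) be the field of Laurent series over F. Then p remains irreducible over L. -/
set_option synthInstance.maxHeartbeats 1000000
set_option maxHeartbeats 1000000

open HahnSeries Polynomial

noncomputable section LSAux

namespace LSAux

variable {F G : Type} [Field F] [Field G] [Algebra F G]

lemma map_coe_nuhom (x : LaurentSeries F) (f : F →+* G) :
    x.map f = x.map (f : F →ₙ+* G) := by ext; rfl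

lemma map_coe_addhom (x : LaurentSeries F) (f : F →+* G) :
    x.map f = x.map f.toAddMonoidHom := by ext; rfl

/-- The ring homomorphism on Laurent series induced by a ring homomorphism on coefficients. -/
def mapRingHom (f : F →+* G) : LaurentSeries F →+* LaurentSeries G where
  toFun x := x.map f
  map_one' := by
    show (1 : LaurentSeries F).map f = 1
    rw [← HahnSeries.C_one, HahnSeries.map_C, map_one, HahnSeries.C_one]
  map_mul' x y := by
    show (x * y).map f = x.map f * y.map f
    rw [map_coe_nuhom, map_coe_nuhom x, map_coe_nuhom y]
    exact HahnSeries.map_mul _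
  map_zero' := by
    show (0 : LaurentSeries F).map f = 0
    ext; simp
  map_add' x y := by
    show (x + y).map f = x.map f + y.map f
    rw [map_coe_addhom, map_coe_addhom x, map_coe_addhom y]
    exact HahnSeries.map_add _

@[simp] lemma mapRingHom_coeff (f : F →+* G) (x : LaurentSeries F) (g : ℤ) :
    (mapRingHom f x).coeff g = f (x.coeff g) := rfl

lemma mapRingHom_C (f : F →+* G) (r : F) :
    mapRingHom f (HahnSeries.C r) = HahnSeries.C (f r) :=
  HahnSeries.map_C r f

lemma smul_LS (r : F) (w : LaurentSeries G) :
    r • w = HahnSeries.C (algebraMap F G r) * w := by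
  rw [HahnSeries.C_mul_eq_smul]
  ext g
  rw [HahnSeries.coeff_smul, HahnSeries.coeff_smul, Algebra.smul_def, smul_eq_mul]

lemma algebraMap_LS (r : F) :
    algebraMap F (LaurentSeries G) r = HahnSeries.C (algebraMap F G r) := by
  rw [HahnSeries.algebraMap_apply', PowerSeries.algebraMap_apply,
    HahnSeries.ofPowerSeries_C]

/-- `HahnSeries.C` as an `F`-algebra homomorphism `G →ₐ[F] G⸨X⸩`. -/
def CAlgHom : G →ₐ[F] LaurentSeries G :=
  { (HahnSeries.C : G →+* LaurentSeries G) with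
    commutes' := fun r => (algebraMap_LS r).symm }

@[simp] lemma CAlgHom_apply (g : G) : (CAlgHom (F := F) g) = HahnSeries.C g := rfl

end LSAux

end LSAux

/-- Let `F ⊆ G` be a field extension, `α ∈ G \ F` algebraic over `F` with minimal
polynomial `p`, and `L = F⸨t⸩` the field of Laurent series over `F`.  Then `p` remains
irreducible over `L`. -/
theorem minpoly_irreducible_over_laurentSeries (F G : Type) [Field F] [Field G]
    [Algebra F G] (α : G) (hα : IsIntegral F α)
    (hnot : α ∉ (algebraMap F G).range) :
    Irreducible ((minpoly F α).map (algebraMap F (LaurentSeries F))) := by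
  classical
  set p : Polynomial F := minpoly F α with hp
  set n : ℕ := p.natDegree with hn
  -- the algebra structure of `G⸨X⸩` over `F⸨X⸩`
  letI : Algebra (LaurentSeries F) (LaurentSeries G) :=
    (LSAux.mapRingHom (algebraMap F G)).toAlgebra
  haveI : @IsScalarTower F (LaurentSeries F) (LaurentSeries G)
      Algebra.toSMul Algebra.toSMul Algebra.toSMul :=
    IsScalarTower.of_algebraMap_eq fun r => by
      rw [LSAux.algebraMap_LS, RingHom.algebraMap_toAlgebra, LSAux.algebraMap_LS,
        LSAux.mapRingHom_C]
      simp
  set a : LaurentSeries G := HahnSeries.C α with ha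
  set P : Polynomial (LaurentSeries F) := p.map (algebraMap F (LaurentSeries F)) with hP
  have hPmonic : P.Monic := (minpoly.monic hα).map _
  have haeval : Polynomial.aeval a P = 0 := by
    rw [hP, Polynomial.aeval_map_algebraMap, ha, ← LSAux.CAlgHom_apply (F := F) α,
      Polynomial.aeval_algHom_apply, minpoly.aeval, map_zero]
  have hint : IsIntegral (LaurentSeries F) a :=
    ⟨P, hPmonic, by rwa [← Polynomial.aeval_def]⟩
  set q : Polynomial (LaurentSeries F) := minpoly (LaurentSeries F) a with hq
  have hqmonic : q.Monic := minpoly.monic hint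
  have hdvd : q ∣ P := minpoly.dvd _ _ haeval
  -- powers of `a` are linearly independent over `F⸨X⸩`
  have hli : LinearIndependent F fun i : Fin n => α ^ (i : ℕ) := linearIndependent_pow α
  have hliL : LinearIndependent (LaurentSeries F) fun i : Fin n => a ^ (i : ℕ) := by
    rw [Fintype.linearIndependent_iff]
    intro c hc i
    ext g
    rw [HahnSeries.coeff_zero]
    have hterm : ∀ j : Fin n, (c j • a ^ (j : ℕ)).coeff g
        = ((c j).coeff g) • α ^ (j : ℕ) := by
      intro j
      have h1 : c j • a ^ (j : ℕ)
          = LSAux.mapRingHom (algebraMap F G) (c j) * HahnSeries.single 0 (α ^ (j : ℕ)) := by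
        rw [Algebra.smul_def]
        congr 1
        rw [ha, ← HahnSeries.C_apply]
        exact (map_pow HahnSeries.C α (j : ℕ)).symm
      rw [h1, HahnSeries.coeff_mul_single_zero, LSAux.mapRingHom_coeff, Algebra.smul_def]
    have hcoeff : ∀ (s : Finset (Fin n)) (f : Fin n → LaurentSeries G),
        (∑ j ∈ s, f j).coeff g = ∑ j ∈ s, (f j).coeff g := fun s f =>
      map_sum (AddMonoidHom.mk' (fun x : LaurentSeries G => x.coeff g)
        (fun x y => HahnSeries.coeff_add)) f s
    have hsum : ∑ j : Fin n, ((c j).coeff g) • α ^ (j : ℕ) = 0 := by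
      have h2 := congrArg (fun x : LaurentSeries G => x.coeff g) hc
      simp only [HahnSeries.coeff_zero] at h2
      calc ∑ j : Fin n, ((c j).coeff g) • α ^ (j : ℕ)
          = ∑ j : Fin n, (c j • a ^ (j : ℕ)).coeff g :=
            Finset.sum_congr rfl fun j _ => (hterm j).symm
        _ = (∑ j : Fin n, c j • a ^ (j : ℕ)).coeff g := (hcoeff _ _).symm
        _ = 0 := h2
    exact Fintype.linearIndependent_iff.mp hli (fun j => (c j).coeff g) hsum i
  -- hence the minimal polynomial of `a` has degree at least `n`
  have hPdeg : P.natDegree = n := by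
    rw [hP, Polynomial.natDegree_map]
  have hPne : P ≠ 0 := hPmonic.ne_zero
  have hdegle : q.natDegree ≤ n := hPdeg ▸ Polynomial.natDegree_le_of_dvd hdvd hPne
  have hdegge : n ≤ q.natDegree := by
    by_contra hlt
    push_neg at hlt
    have hsum0 : ∑ i : Fin n, q.coeff (i : ℕ) • a ^ (i : ℕ) = 0 := by
      have h1 : Polynomial.aeval a q = 0 := minpoly.aeval _ _
      rw [Polynomial.aeval_eq_sum_range] at h1
      rw [← h1]
      rw [← Finset.sum_range fun i => q.coeff i • a ^ i]
      symm
      apply Finset.sum_subset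
      · intro x hx
        rw [Finset.mem_range] at hx ⊢
        omega
      · intro x _ hx
        rw [Finset.mem_range, not_lt] at hx
        have : q.coeff x = 0 := Polynomial.coeff_eq_zero_of_natDegree_lt (by omega)
        rw [this]; exact zero_smul (LaurentSeries F) (a ^ x)
    have := Fintype.linearIndependent_iff.mp hliL (fun i => q.coeff (i : ℕ)) hsum0
      ⟨q.natDegree, hlt⟩
    simp only [hqmonic.coeff_natDegree] at this
    exact one_ne_zero this
  have hdeg : P.natDegree ≤ q.natDegree := by omega
  have hassoc : Associated q P :=
    Polynomial.associated_of_dvd_of_natDegree_le hdvd hPne hdeg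
  have heq : q = P := Polynomial.eq_of_monic_of_associated hqmonic hPmonic hassoc
  rw [← heq]
  exact minpoly.irreducible hint
end

section
/- If F ⊊ G is a proper field extension with G/F finite, then there is no F-algebra isomorphism between the Laurent series fields F((s)) and G((t)). -/
set_option synthInstance.maxHeartbeats 1000000
set_option maxHeartbeats 1000000

lemma psc (F : Type) [Field F] (f : F) :
    algebraMap F (PowerSeries F) f = PowerSeries.C f := by
  simp [PowerSeries.algebraMap_apply]

lemma lc (F : Type) [Field F] (f : F) :
    algebraMap F (LaurentSeries F) f = HahnSeries.C f := by
  rw [HahnSeries.algebraMap_apply' (Γ := ℤ) (R := F), psc, HahnSeries.ofPowerSeries_C]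

lemma lc' (F : Type) [Field F] (f : F) :
    algebraMap F (LaurentSeries F) f
      = algebraMap (PowerSeries F) (LaurentSeries F) (PowerSeries.C f) := by
  rw [HahnSeries.algebraMap_apply' (Γ := ℤ) (R := F), psc, LaurentSeries.coe_algebraMap]

lemma comp_eq (F : Type) [Field F] :
    (algebraMap (PowerSeries F) (LaurentSeries F)).comp (algebraMap F (PowerSeries F))
      = algebraMap F (LaurentSeries F) :=
  RingHom.ext fun f => by rw [RingHom.comp_apply, psc, ← lc' F f]

lemma comp_eq2 (F G : Type) [Field F] [Field G] [Algebra F G] :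
    (algebraMap G (LaurentSeries G)).comp (algebraMap F G)
      = algebraMap F (LaurentSeries G) :=
  RingHom.ext fun a => by
    rw [RingHom.comp_apply, lc G, HahnSeries.algebraMap_apply' (Γ := ℤ) (R := G),
      PowerSeries.algebraMap_apply, HahnSeries.ofPowerSeries_C]

/-- The constant coefficient of a power series, as an `F`-algebra hom. -/
def ccAlgHom (F : Type) [Field F] : PowerSeries F →ₐ[F] F :=
  { PowerSeries.constantCoeff (R := F) with
    commutes' := fun a => by rw [RingHom.toFun_eq_coe, psc]; simp }

/-- Any element of `F⸨X⸩` integral over `F` is a constant. -/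
lemma key (F : Type) [Field F] (y : LaurentSeries F) (hy : IsIntegral F y) :
    ∃ a : F, algebraMap F (LaurentSeries F) a = y := by
  obtain ⟨p, pm, hp⟩ := hy
  have hy' : IsIntegral (PowerSeries F) y := by
    refine ⟨p.map (algebraMap F (PowerSeries F)), pm.map _, ?_⟩
    rw [Polynomial.eval₂_map, comp_eq]
    exact hp
  obtain ⟨Y, hY⟩ := IsIntegrallyClosed.isIntegral_iff.mp hy'
  set a := PowerSeries.constantCoeff (R := F) Y with ha
  refine ⟨a, ?_⟩
  have hinj : Function.Injective (algebraMap (PowerSeries F) (LaurentSeries F)) := by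
    rw [LaurentSeries.coe_algebraMap]; exact HahnSeries.ofPowerSeries_injective
  have hYint : IsIntegral F Y := by
    refine ⟨p, pm, ?_⟩
    apply hinj
    rw [map_zero, Polynomial.hom_eval₂, comp_eq, hY]
    exact hp
  set z : PowerSeries F := Y - PowerSeries.C a with hz
  have hzint : IsIntegral F z := hYint.sub ((psc F a) ▸ isIntegral_algebraMap)
  have hcc : (ccAlgHom F) z = 0 := by
    show PowerSeries.constantCoeff (R := F) z = 0
    simp [hz, ha]
  have haev : Polynomial.aeval z (minpoly F z) = 0 := minpoly.aeval F z
  have hq0 : (minpoly F z).coeff 0 = 0 := by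
    have h2 := congrArg (ccAlgHom F) haev
    rw [← Polynomial.aeval_algHom_apply, map_zero, hcc] at h2
    rw [Polynomial.aeval_def, Polynomial.eval₂_at_zero] at h2
    simpa using h2
  have hXq : Polynomial.X ∣ minpoly F z := Polynomial.X_dvd_iff.mpr hq0
  have hqX : minpoly F z = Polynomial.X :=
    (Polynomial.eq_of_monic_of_associated Polynomial.monic_X (minpoly.monic hzint)
      (Polynomial.irreducible_X.associated_of_dvd (minpoly.irreducible hzint) hXq)).symm
  have hz0 : z = 0 := by
    have h3 := minpoly.aeval F z
    rwa [hqX, Polynomial.aeval_X] at h3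
  have hYC : Y = PowerSeries.C a := sub_eq_zero.mp (hz ▸ hz0)
  rw [lc' F a, ← hYC, hY]

/-- If `F ⊊ G` is a proper finite field extension, then there is no `F`-algebra
isomorphism between the Laurent series fields `F⸨s⸩` and `G⸨t⸩`. -/
theorem no_algIso_laurentSeries_of_proper_finite_extension (F G : Type) [Field F] [Field G]
    [Algebra F G] [FiniteDimensional F G]
    (h : ∃ x : G, x ∉ (algebraMap F G).range) :
    IsEmpty (LaurentSeries F ≃ₐ[F] LaurentSeries G) := by
  obtain ⟨x, hx⟩ := h
  refine ⟨fun e => hx ?_⟩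
  have hxi : IsIntegral F x := IsIntegral.of_finite F x
  have h1 : IsIntegral F (algebraMap G (LaurentSeries G) x) := by
    obtain ⟨p, pm, hp⟩ := hxi
    refine ⟨p, pm, ?_⟩
    rw [← comp_eq2 F G, ← Polynomial.hom_eval₂, hp, map_zero]
  have h2 : IsIntegral F (e.symm (algebraMap G (LaurentSeries G) x)) := by
    obtain ⟨p, pm, hp⟩ := h1
    refine ⟨p, pm, ?_⟩
    rw [← Polynomial.aeval_def] at hp ⊢
    rw [Polynomial.aeval_algHom_apply e.symm, hp, map_zero]
  obtain ⟨a, ha⟩ := key F (e.symm (algebraMap G (LaurentSeries G) x)) h2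
  refine ⟨a, ?_⟩
  have heq := congrArg e ha
  rw [AlgEquiv.apply_symm_apply, AlgEquiv.commutes, ← comp_eq2 F G, RingHom.comp_apply] at heq
  exact (algebraMap G (LaurentSeries G)).injective heq
end
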